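/- Let m ≥ 3 be an integer and Δ: [1, 4m-5] → {1,2,3,4} a coloring. If some color c satisfies |Δ^{-1}(c)| ≥ 3m - 3, then there exist monochromatic m-sets X ≺ Y in [1, 4m-5] with 2(x_m - x_1) ≤ y_m - x_1 (i.e., Δ is not an L(4)-coloring). -/

import Mathlib

/-- `x` is a monochromatic m-set (indexed 1..m) inside `S` under coloring `Δ`. -/
def IsMonoMSet (m : ℕ) (Δ : ℕ → ℕ) (S : Finset ℕ) (x : ℕ → ℕ) : Prop :=
  (∀ i j, 1 ≤ i → i < j → j ≤ m → x i < x j) ∧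
  (∀ i, 1 ≤ i → i ≤ m → x i ∈ S) ∧
  (∀ i, 1 ≤ i → i ≤ m → Δ (x i) = Δ (x 1))

/-- There exist monochromatic m-sets X ≺ Y in `S` with 2(x_m - x_1) ≤ y_m - x_1. -/
def HasGoodPair (m : ℕ) (Δ : ℕ → ℕ) (S : Finset ℕ) : Prop :=
  ∃ x y : ℕ → ℕ, IsMonoMSet m Δ S x ∧ IsMonoMSet m Δ S y ∧
    x m < y 1 ∧ 2 * (x m - x 1) ≤ y m - x 1

/-- `g m r` : least N such that every r-coloring of [1,N] has a good pair. -/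
noncomputable def g (m r : ℕ) : ℕ :=
  sInf {N | ∀ Δ : ℕ → ℕ, (∀ z ∈ Finset.Icc 1 N, Δ z ∈ Finset.Icc 1 r) →
    HasGoodPair m Δ (Finset.Icc 1 N)}

theorem stmt12 (m : ℕ) (hm : 3 ≤ m) (Δ : ℕ → ℕ)
    (hΔ : ∀ z ∈ Finset.Icc 1 (4 * m - 5), Δ z ∈ Finset.Icc 1 4)
    (c : ℕ)
    (hc : 3 * m - 3 ≤
      ((Finset.Icc 1 (4 * m - 5)).filter (fun z => Δ z = c)).card) :
    HasGoodPair m Δ (Finset.Icc 1 (4 * m - 5)) := by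
  classical
  set N := 4 * m - 5 with hN
  set A := (Finset.Icc 1 N).filter (fun z => Δ z = c) with hAdef
  have hsub : A ⊆ Finset.Icc 1 N := Finset.filter_subset _ _
  set k := A.card with hk
  have hkc : 3 * m - 3 ≤ k := hc
  have hkN : k ≤ N := by
    have := Finset.card_le_card hsub
    simpa [Nat.card_Icc] using this
  have hmk : m ≤ k := by omega
  have hm1k : m - 1 < k := by omega
  let e := A.orderIsoOfFin rfl
  let f : ℕ → ℕ := fun t => if h : t < k then (e ⟨t, h⟩ : ℕ) else 0
  have hfval : ∀ t (h : t < k), f t = (e ⟨t, h⟩ : ℕ) := fun t h => dif_pos h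
  have hfA : ∀ t, t < k → f t ∈ A := by
    intro t h
    rw [hfval t h]; exact (e ⟨t, h⟩).2
  have hfmono : ∀ s t, s < t → t < k → f s < f t := by
    intro s t hst ht
    rw [hfval s (lt_trans hst ht), hfval t ht]
    exact_mod_cast e.strictMono (show (⟨s, lt_trans hst ht⟩ : Fin k) < ⟨t, ht⟩ from hst)
  have hfcolor : ∀ t, t < k → Δ (f t) = c := by
    intro t ht
    have h2 := hfA t ht
    rw [hAdef] at h2
    exact (Finset.mem_filter.mp h2).2
  have hfIcc : ∀ t, t < k → f t ∈ Finset.Icc 1 N := fun t ht => hsub (hfA t ht)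
  -- Claim 1 : f (m-1) ≤ f 0 + (2*m - 3)
  have hIccsub : Finset.Icc (f 0) (f (m-1)) ⊆ Finset.Icc 1 N := by
    intro z hz
    have h0 := Finset.mem_Icc.mp (hfIcc 0 (by omega))
    have h1 := Finset.mem_Icc.mp (hfIcc (m-1) hm1k)
    simp only [Finset.mem_Icc] at *
    omega
  have hcardA : (Finset.Icc (f 0) (f (m-1)) ∩ A).card ≤ m := by
    have : (Finset.Icc (f 0) (f (m-1)) ∩ A).card ≤ (Finset.range m).card := by
      apply Finset.card_le_card_of_injOn
        (fun a => if ha : a ∈ A then (e.symm ⟨a, ha⟩ : ℕ) else 0)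
      · intro a ha
        rcases Finset.mem_inter.mp ha with ⟨haI, haA⟩
        simp only [dif_pos haA, Finset.coe_range, Set.mem_Iio]
        have hle : a ≤ f (m-1) := (Finset.mem_Icc.mp haI).2
        rw [hfval (m-1) hm1k] at hle
        have : (⟨a, haA⟩ : A) ≤ e ⟨m-1, hm1k⟩ := hle
        have := e.symm.monotone this
        rw [OrderIso.symm_apply_apply] at this
        have : (e.symm ⟨a, haA⟩ : ℕ) ≤ m - 1 := this
        omega
      · intro a ha b hb hab
        rcases Finset.mem_inter.mp ha with ⟨_, haA⟩
        rcases Finset.mem_inter.mp hb with ⟨_, hbA⟩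
        simp only [dif_pos haA, dif_pos hbA] at hab
        have := e.symm.injective (Fin.val_injective hab)
        exact congrArg Subtype.val this
    simpa using this
  have hclaim1 : f (m-1) ≤ f 0 + (2 * m - 3) := by
    have hsplit : Finset.Icc (f 0) (f (m-1)) ⊆
        (Finset.Icc (f 0) (f (m-1)) ∩ A) ∪ (Finset.Icc 1 N \ A) := by
      intro z hz
      by_cases hzA : z ∈ A
      · exact Finset.mem_union_left _ (Finset.mem_inter.mpr ⟨hz, hzA⟩)
      · exact Finset.mem_union_right _ (Finset.mem_sdiff.mpr ⟨hIccsub hz, hzA⟩)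
    have hcard := Finset.card_le_card hsplit
    have hcard2 := Finset.card_union_le (Finset.Icc (f 0) (f (m-1)) ∩ A)
      (Finset.Icc 1 N \ A)
    have hsd : (Finset.Icc 1 N \ A).card = N - k := by
      rw [Finset.card_sdiff_of_subset hsub, Nat.card_Icc]
      omega
    have hle01 : f 0 ≤ f (m-1) := le_of_lt (hfmono 0 (m-1) (by omega) hm1k)
    have hIcard : (Finset.Icc (f 0) (f (m-1))).card = f (m-1) - f 0 + 1 := by
      rw [Nat.card_Icc]; omega
    omega
  -- Claim 2 : f (m-1) + (k - m) ≤ f (k-1)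
  have hclaim2 : f (m-1) + (k - m) ≤ f (k-1) := by
    have : (Finset.Ico m k).card ≤ (Finset.Ioc (f (m-1)) (f (k-1))).card := by
      apply Finset.card_le_card_of_injOn f
      · intro t ht
        rcases Finset.mem_Ico.mp ht with ⟨h1, h2⟩
        refine Finset.mem_Ioc.mpr ⟨hfmono (m-1) t (by omega) h2, ?_⟩
        rcases eq_or_lt_of_le (Nat.le_sub_one_of_lt h2) with h | h
        · rw [h]
        · exact le_of_lt (hfmono t (k-1) h (by omega))
      · intro a ha b hb hab
        rcases Finset.mem_Ico.mp ha with ⟨_, ha2⟩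
        rcases Finset.mem_Ico.mp hb with ⟨_, hb2⟩
        by_contra hne
        rcases Nat.lt_or_ge a b with h | h
        · exact absurd hab (ne_of_lt (hfmono a b h hb2))
        · have h' : b < a := lt_of_le_of_ne h (Ne.symm hne)
          exact absurd hab.symm (ne_of_lt (hfmono b a h' ha2))
    rw [Nat.card_Ico, Nat.card_Ioc] at this
    omega
  -- assemble
  refine ⟨fun i => f (i-1), fun i => f (k - m + (i-1)), ?_, ?_, ?_, ?_⟩
  · refine ⟨?_, ?_, ?_⟩
    · intro i j hi hij hjm
      exact hfmono (i-1) (j-1) (by omega) (by omega)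
    · intro i hi him
      exact hfIcc (i-1) (by omega)
    · intro i hi him
      rw [hfcolor (i-1) (by omega)]
      simp only
      rw [hfcolor 0 (by omega)]
  · refine ⟨?_, ?_, ?_⟩
    · intro i j hi hij hjm
      exact hfmono (k - m + (i-1)) (k - m + (j-1)) (by omega) (by omega)
    · intro i hi him
      exact hfIcc (k - m + (i-1)) (by omega)
    · intro i hi him
      rw [hfcolor (k - m + (i-1)) (by omega)]
      simp only
      rw [hfcolor (k - m + (1-1)) (by omega)]
  · exact hfmono (m-1) (k - m + (1-1)) (by omega) (by omega)
  · have heq : k - m + (m-1) = k - 1 := by omega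
    simp only [heq, Nat.sub_self]
    have hle01 : f 0 ≤ f (m-1) := le_of_lt (hfmono 0 (m-1) (by omega) hm1k)
    omega
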